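/- Suppose π(θ, e) = π₀(e) + θ·e for a continuous, strictly concave π₀ : E → ℝ, with π(θ,0) < π(θ,ē) for all θ ∈ Θ. Then the map θ ↦ ê(θ) is nondecreasing on Θ: θ ≤ θ' implies ê(θ) ≤ ê(θ'). -/
import Mathlib


open Set MeasureTheory

noncomputable section

/-- The set of belief-compatible emission levels under disclosure policy `d`,
on the emission space `E = [0, ebar]`. -/
def BCset (ebar : ℝ) (d : ℝ → ℝ) : Set ℝ :=
  {e | e ∈ Icc 0 ebar ∧ ∀ e' ∈ Icc 0 ebar, d e' = d e → e' ≤ e}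

/-- `d` is more transparent than `d'`: the fibers of `d` refine those of `d'`. -/
def MoreTransparent (ebar : ℝ) (d d' : ℝ → ℝ) : Prop :=
  ∀ e₁ ∈ Icc (0:ℝ) ebar, ∀ e₂ ∈ Icc (0:ℝ) ebar, d e₁ = d e₂ → d' e₁ = d' e₂

/-- A policy is admissible if for every type `θ ∈ Θ`, the profit `π θ ·`
attains a maximum on the belief-compatible set. -/
def Admissible (ebar θl θh : ℝ) (π : ℝ → ℝ → ℝ) (d : ℝ → ℝ) : Prop :=
  ∀ θ ∈ Icc θl θh, ∃ e ∈ BCset ebar d, ∀ e' ∈ BCset ebar d, π θ e' ≤ π θ e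

/-- The maximized profit `π_d(θ)` of type `θ` under policy `d`. -/
def profitFn (ebar : ℝ) (π : ℝ → ℝ → ℝ) (d : ℝ → ℝ) (θ : ℝ) : ℝ :=
  sSup (π θ '' BCset ebar d)

/-- The equilibrium emission `γ_d(θ)`: the least maximizer of `π θ ·` on the
belief-compatible set. -/
def emissionFn (ebar : ℝ) (π : ℝ → ℝ → ℝ) (d : ℝ → ℝ) (θ : ℝ) : ℝ :=
  sInf {e | e ∈ BCset ebar d ∧ ∀ e' ∈ BCset ebar d, π θ e' ≤ π θ e}

/-- Expected profit `Π(d) = ∫ π_d(θ) f(θ) dθ`. -/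
def ExpProfit (ebar θl θh : ℝ) (π : ℝ → ℝ → ℝ) (f : ℝ → ℝ) (d : ℝ → ℝ) : ℝ :=
  ∫ θ in Icc θl θh, profitFn ebar π d θ * f θ

/-- Expected emission `Γ(d) = ∫ γ_d(θ) f(θ) dθ`. -/
def ExpEmission (ebar θl θh : ℝ) (π : ℝ → ℝ → ℝ) (f : ℝ → ℝ) (d : ℝ → ℝ) : ℝ :=
  ∫ θ in Icc θl θh, emissionFn ebar π d θ * f θ

/-- `d` is Pareto efficient: no admissible policy yields weakly higher expected
profit and weakly lower expected emission with at least one strict. -/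
def Efficient (ebar θl θh : ℝ) (π : ℝ → ℝ → ℝ) (f : ℝ → ℝ) (d : ℝ → ℝ) : Prop :=
  ¬ ∃ d' : ℝ → ℝ, Admissible ebar θl θh π d' ∧
      ExpProfit ebar θl θh π f d ≤ ExpProfit ebar θl θh π f d' ∧
      ExpEmission ebar θl θh π f d' ≤ ExpEmission ebar θl θh π f d ∧
      (ExpProfit ebar θl θh π f d < ExpProfit ebar θl θh π f d' ∨
        ExpEmission ebar θl θh π f d' < ExpEmission ebar θl θh π f d)

/-- with `π(θ,e) = π₀(e) + θ·e`, the unconstrained optimum `ê` is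
nondecreasing in `θ`. -/
theorem ehat_monotone (ebar θl θh : ℝ) (hebar : 0 < ebar) (hθ : θl ≤ θh)
    (π0 : ℝ → ℝ) (π : ℝ → ℝ → ℝ)
    (hπ : ∀ θ e, π θ e = π0 e + θ * e)
    (hπ0cont : ContinuousOn π0 (Icc 0 ebar))
    (hπ0conc : StrictConcaveOn ℝ (Icc 0 ebar) π0)
    (hIR : ∀ θ ∈ Icc θl θh, π θ 0 < π θ ebar)
    (ehat : ℝ → ℝ)
    (hehat : ∀ θ ∈ Icc θl θh, ehat θ ∈ Icc 0 ebar ∧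
        (∀ e ∈ Icc 0 ebar, π θ e ≤ π θ (ehat θ)) ∧
        (∀ e ∈ Icc 0 ebar, (∀ e' ∈ Icc 0 ebar, π θ e' ≤ π θ e) → e = ehat θ)) :
    ∀ θ ∈ Icc θl θh, ∀ θ' ∈ Icc θl θh, θ ≤ θ' → ehat θ ≤ ehat θ' := by
  intro θ hθm θ' hθ'm hle
  obtain ⟨ha, hmax, huniq⟩ := hehat θ hθm
  obtain ⟨hb, hmax', huniq'⟩ := hehat θ' hθ'm
  rcases eq_or_lt_of_le hle with heq | hlt
  · subst heq
    exact le_of_eq (huniq _ hb hmax').symm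
  · by_contra hgt
    push_neg at hgt
    have h1 := hmax _ hb
    have h2 := hmax' _ ha
    rw [hπ, hπ] at h1 h2
    nlinarith
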